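/- Let μ₀, μ₁ ∈ ℝ and b₀, b₁ > 0. Let Lap(μ, b) denote the probability measure on ℝ with density x ↦ (2b)⁻¹·exp(−|x−μ|/b) with respect to Lebesgue measure. Then the Kullback-Leibler divergence satisfies KL( Lap(μ₁, b₁) ‖ Lap(μ₀, b₀) ) = log(b₀/b₁) + |μ₁ − μ₀|/b₀ + (b₁/b₀)·exp(−|μ₁ − μ₀|/b₁) − 1. -/

import Mathlib

open MeasureTheory Real Set Filter Topology
open scoped NNReal ENNReal

/-- The Laplace distribution on `ℝ` with location parameter `μ` and scale
parameter `b`: the measure with density `x ↦ (2b)⁻¹·exp(−|x−μ|/b)` with respect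
to Lebesgue measure. -/
noncomputable def laplaceMeasure (μ b : ℝ) : Measure ℝ :=
  volume.withDensity fun x => ENNReal.ofReal ((2 * b)⁻¹ * Real.exp (-|x - μ| / b))

/-- The Kullback-Leibler divergence `KL(Q ‖ Q') = ∫ log (dQ/dQ') dQ`, as a real
number, where `dQ/dQ'` is the Radon-Nikodym derivative. -/
noncomputable def klDiv {α : Type*} [MeasurableSpace α] (Q Q' : Measure α) : ℝ :=
  ∫ x, Real.log ((Q.rnDeriv Q') x).toReal ∂Q


lemma lapTendsto (b A B : ℝ) (hb : 0 < b) :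
    Tendsto (fun x => (A + B * x) * Real.exp (-x / b)) atTop (𝓝 0) := by
  have h0 := tendsto_rpow_mul_exp_neg_mul_atTop_nhds_zero 0 b⁻¹ (by positivity)
  have h1 := tendsto_rpow_mul_exp_neg_mul_atTop_nhds_zero 1 b⁻¹ (by positivity)
  have h := (h0.const_mul A).add (h1.const_mul B)
  rw [mul_zero, mul_zero, add_zero] at h
  refine h.congr fun x => ?_
  rw [rpow_zero, rpow_one, show -x / b = -(b⁻¹ * x) by ring]
  ring

lemma lapIntegrableOn (b : ℝ) (hb : 0 < b) (A B a : ℝ) :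
    IntegrableOn (fun x => (A + B * x) * Real.exp (-x / b)) (Ioi a) := by
  refine integrable_of_isBigO_exp_neg (b := (2 * b)⁻¹) (by positivity) (by fun_prop) ?_
  refine Asymptotics.IsLittleO.isBigO ?_
  rw [Asymptotics.isLittleO_iff_tendsto (fun x h => absurd h (Real.exp_ne_zero _))]
  refine (lapTendsto (2 * b) A B (by positivity)).congr fun x => ?_
  rw [eq_div_iff (Real.exp_ne_zero _), mul_assoc, ← Real.exp_add]
  congr 2
  field_simp
  ring

lemma lapIntegralIoi (b : ℝ) (hb : 0 < b) (A B a : ℝ) :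
    ∫ x in Ioi a, (A + B * x) * Real.exp (-x / b) =
      (b * A + b ^ 2 * B + b * B * a) * Real.exp (-a / b) := by
  have hderiv : ∀ x ∈ Ici a, HasDerivAt
      (fun x => -(b * A + b ^ 2 * B + b * B * x) * Real.exp (-x / b))
      ((A + B * x) * Real.exp (-x / b)) x := by
    intro x _
    have h1 : HasDerivAt (fun x : ℝ => -(b * A + b ^ 2 * B + b * B * x)) (-(b * B)) x := by
      have e : (fun x : ℝ => -(b * A + b ^ 2 * B + b * B * x)) =
          fun x => -(b * B * x + (b * A + b ^ 2 * B)) := by funext y; ring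
      rw [e]
      simpa only [mul_one, id, Pi.neg_def] using (((hasDerivAt_id x).const_mul (b * B)).add_const (b * A + b ^ 2 * B)).neg
    have h2 : HasDerivAt (fun x : ℝ => Real.exp (-x / b)) (Real.exp (-x / b) * (-1 / b)) x := by
      exact HasDerivAt.exp (by simpa using ((hasDerivAt_id x).neg.div_const b))
    have : HasDerivAt (fun x => -(b * A + b ^ 2 * B + b * B * x) * Real.exp (-x / b)) _ x := h1.fun_mul h2
    convert this using 1
    field_simp
    ring
  have htend : Tendsto (fun x => -(b * A + b ^ 2 * B + b * B * x) * Real.exp (-x / b))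
      atTop (𝓝 0) := by
    refine (lapTendsto b (-(b * A + b ^ 2 * B)) (-(b * B)) hb).congr fun x => ?_
    ring
  have := integral_Ioi_of_hasDerivAt_of_tendsto' hderiv (lapIntegrableOn b hb A B a) htend
  rw [this]
  ring

lemma lapAbsIntegrableOnIoi (b : ℝ) (hb : 0 < b) (c : ℝ) :
    IntegrableOn (fun x => |x - c| * Real.exp (-|x| / b)) (Ioi 0) := by
  refine Integrable.mono' (lapIntegrableOn b hb |c| 1 0)
    (Continuous.aestronglyMeasurable (by continuity)) ?_
  refine (ae_restrict_iff' measurableSet_Ioi).mpr (ae_of_all _ fun x hx => ?_)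
  have hx0 : (0:ℝ) < x := hx
  rw [Real.norm_eq_abs, abs_mul, abs_abs, abs_of_pos (Real.exp_pos _),
    abs_of_pos hx0, one_mul]
  have : |x - c| ≤ |c| + x := by
    calc |x - c| ≤ |x| + |c| := abs_sub x c
    _ = |c| + x := by rw [abs_of_pos hx0]; ring
  exact mul_le_mul_of_nonneg_right this (Real.exp_pos _).le

lemma integrableOn_Iic_comp_neg' {f : ℝ → ℝ} (h : IntegrableOn (fun x => f (-x)) (Ici 0)) :
    IntegrableOn f (Iic (0:ℝ)) := by
  rw [show (volume : Measure ℝ) = Measure.map Neg.neg volume from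
    (Measure.map_neg_eq_self (volume : Measure ℝ)).symm]
  have m : MeasurableEmbedding fun x : ℝ => -x := (Homeomorph.neg ℝ).measurableEmbedding
  rw [m.integrableOn_map_iff]
  simpa [Function.comp_def, neg_preimage, neg_Iic, neg_zero] using h

lemma lapAbsIntegrable (b : ℝ) (hb : 0 < b) (c : ℝ) :
    Integrable (fun x => |x - c| * Real.exp (-|x| / b)) := by
  rw [← integrableOn_univ, ← Iic_union_Ioi (a := (0:ℝ))]
  refine IntegrableOn.union ?_ (lapAbsIntegrableOnIoi b hb c)
  apply integrableOn_Iic_comp_neg'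
  have e : (fun x : ℝ => |-x - c| * Real.exp (-|(-x)| / b)) =
      fun x => |x - (-c)| * Real.exp (-|x| / b) := by
    funext x
    rw [abs_neg, show -x - c = -(x - -c) by ring, abs_neg]
  rw [e]
  exact Iff.mpr integrableOn_Ici_iff_integrableOn_Ioi (lapAbsIntegrableOnIoi b hb (-c))

lemma lapExpAbsIntegrableOnIoi (b : ℝ) (hb : 0 < b) :
    IntegrableOn (fun x : ℝ => Real.exp (-|x| / b)) (Ioi 0) := by
  refine (lapIntegrableOn b hb 1 0 0).congr_fun (fun x hx => ?_) measurableSet_Ioi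
  rw [abs_of_pos (show (0:ℝ) < x from hx)]
  ring

lemma lapExpAbsIntegrable (b : ℝ) (hb : 0 < b) :
    Integrable (fun x : ℝ => Real.exp (-|x| / b)) := by
  rw [← integrableOn_univ, ← Iic_union_Ioi (a := (0:ℝ))]
  refine IntegrableOn.union ?_ (lapExpAbsIntegrableOnIoi b hb)
  apply integrableOn_Iic_comp_neg'
  have e : (fun x : ℝ => Real.exp (-|(-x)| / b)) = fun x => Real.exp (-|x| / b) := by
    funext x; rw [abs_neg]
  rw [e]
  exact Iff.mpr integrableOn_Ici_iff_integrableOn_Ioi (lapExpAbsIntegrableOnIoi b hb)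

lemma lapExpAbsIntegral (b : ℝ) (hb : 0 < b) :
    ∫ x : ℝ, Real.exp (-|x| / b) = 2 * b := by
  rw [integral_comp_abs (f := fun x => Real.exp (-x / b))]
  have := lapIntegralIoi b hb 1 0 0
  simp only [zero_mul, add_zero, one_mul, mul_zero, mul_one, neg_zero, zero_div,
    Real.exp_zero, mul_zero, add_zero] at this
  rw [this]

lemma lapAbsMulIntegral (b : ℝ) (hb : 0 < b) :
    ∫ x : ℝ, |x| * Real.exp (-|x| / b) = 2 * b ^ 2 := by
  rw [integral_comp_abs (f := fun x => x * Real.exp (-x / b))]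
  have := lapIntegralIoi b hb 0 1 0
  simp only [zero_add, one_mul, mul_zero, mul_one, zero_mul, add_zero, neg_zero, zero_div,
    Real.exp_zero, mul_zero, zero_mul, zero_add] at this
  rw [this]

lemma lapAbsIntegralNonneg (b : ℝ) (hb : 0 < b) (c : ℝ) (hc : 0 ≤ c) :
    ∫ x : ℝ, |x - c| * Real.exp (-|x| / b) = 2 * b * c + 2 * b ^ 2 * Real.exp (-c / b) := by
  rw [← intervalIntegral.integral_Iic_add_Ioi (b := (0:ℝ)) (lapAbsIntegrable b hb c).integrableOn
    (lapAbsIntegrable b hb c).integrableOn]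
  have hgint : IntegrableOn (fun x => |x - c| * Real.exp (-x / b)) (Ioi 0) := by
    refine (lapAbsIntegrableOnIoi b hb c).congr_fun (fun x hx => ?_) measurableSet_Ioi
    beta_reduce
    rw [abs_of_pos (show (0:ℝ) < x from hx)]
  have hIic : ∫ x in Iic (0:ℝ), |x - c| * Real.exp (-|x| / b) = b * c + b ^ 2 := by
    rw [show Iic (0:ℝ) = Iic (-0) by rw [neg_zero], ← integral_comp_neg_Ioi]
    rw [setIntegral_congr_fun measurableSet_Ioi
      (g := fun x => (c + 1 * x) * Real.exp (-x / b)) ?_]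
    · have := lapIntegralIoi b hb c 1 0
      simp only [mul_zero, add_zero, mul_one, neg_zero, zero_div, Real.exp_zero] at this
      rw [this]
    · intro x hx
      have hx0 : (0:ℝ) < x := hx
      show |-x - c| * Real.exp (-|(-x)| / b) = (c + 1 * x) * Real.exp (-x / b)
      rw [abs_neg, abs_of_pos hx0, show -x - c = -(x + c) by ring, abs_neg,
        abs_of_pos (by linarith)]
      ring_nf
  have hIoi : ∫ x in Ioi (0:ℝ), |x - c| * Real.exp (-|x| / b) =
      b * c - b ^ 2 + 2 * b ^ 2 * Real.exp (-c / b) := by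
    rw [setIntegral_congr_fun measurableSet_Ioi
      (g := fun x => |x - c| * Real.exp (-x / b))
      (fun x hx => by rw [abs_of_pos (show (0:ℝ) < x from hx)])]
    rw [← Ioc_union_Ioi_eq_Ioi hc, setIntegral_union (Ioc_disjoint_Ioi le_rfl)
      measurableSet_Ioi (hgint.mono_set Ioc_subset_Ioi_self)
      (hgint.mono_set (Ioi_subset_Ioi hc))]
    have hIoc : ∫ x in Ioc (0:ℝ) c, |x - c| * Real.exp (-x / b) =
        ∫ x in Ioc (0:ℝ) c, (c + (-1) * x) * Real.exp (-x / b) := by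
      refine setIntegral_congr_fun measurableSet_Ioc fun x hx => ?_
      rw [abs_of_nonpos (by linarith [hx.2] : x - c ≤ 0)]
      ring_nf
    have hIoiC : ∫ x in Ioi c, |x - c| * Real.exp (-x / b) =
        ∫ x in Ioi c, (-c + 1 * x) * Real.exp (-x / b) := by
      refine setIntegral_congr_fun measurableSet_Ioi fun x hx => ?_
      rw [abs_of_pos (by linarith [show c < x from hx] : 0 < x - c)]
      ring_nf
    have hsplit : (∫ x in Ioc (0:ℝ) c, (c + (-1) * x) * Real.exp (-x / b)) +
        ∫ x in Ioi c, (c + (-1) * x) * Real.exp (-x / b) =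
        ∫ x in Ioi (0:ℝ), (c + (-1) * x) * Real.exp (-x / b) := by
      rw [← setIntegral_union (Ioc_disjoint_Ioi le_rfl) measurableSet_Ioi
        ((lapIntegrableOn b hb c (-1) 0).mono_set Ioc_subset_Ioi_self)
        (lapIntegrableOn b hb c (-1) c), Ioc_union_Ioi_eq_Ioi hc]
    rw [hIoc, hIoiC, lapIntegralIoi b hb (-c) 1 c]
    have h0 := lapIntegralIoi b hb c (-1) 0
    have hc' := lapIntegralIoi b hb c (-1) c
    rw [h0, hc'] at hsplit
    simp only [neg_zero, zero_div, Real.exp_zero] at hsplit ⊢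
    nlinarith [hsplit, Real.exp_pos (-c / b)]
  rw [hIic, hIoi]
  ring

lemma lapAbsIntegral (b : ℝ) (hb : 0 < b) (c : ℝ) :
    ∫ x : ℝ, |x - c| * Real.exp (-|x| / b) = 2 * b * |c| + 2 * b ^ 2 * Real.exp (-|c| / b) := by
  rcases le_or_gt 0 c with hc | hc
  · rw [abs_of_nonneg hc]; exact lapAbsIntegralNonneg b hb c hc
  · have h := lapAbsIntegralNonneg b hb (-c) (by linarith)
    rw [abs_of_neg hc]
    rw [← integral_neg_eq_self (fun x => |x - c| * Real.exp (-|x| / b))]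
    rw [show (fun x : ℝ => |(-x) - c| * Real.exp (-|(-x)| / b)) =
        fun x => |x - (-c)| * Real.exp (-|x| / b) by
      funext x; rw [abs_neg, show -x - c = -(x - -c) by ring, abs_neg]]
    exact h

lemma lapShiftIntegrable (b : ℝ) (hb : 0 < b) (μ c : ℝ) :
    Integrable (fun x => |x - c| * Real.exp (-|x - μ| / b)) := by
  have h := (lapAbsIntegrable b hb (c - μ)).comp_sub_right μ
  refine h.congr (ae_of_all _ fun x => ?_)
  show |x - μ - (c - μ)| * _ = _
  rw [show x - μ - (c - μ) = x - c by ring]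

lemma lapShiftIntegral (b : ℝ) (hb : 0 < b) (μ c : ℝ) :
    ∫ x : ℝ, |x - c| * Real.exp (-|x - μ| / b) =
      2 * b * |c - μ| + 2 * b ^ 2 * Real.exp (-|c - μ| / b) := by
  rw [show (fun x : ℝ => |x - c| * Real.exp (-|x - μ| / b)) =
      fun x => |(x - μ) - (c - μ)| * Real.exp (-|x - μ| / b) by
    funext x; rw [show x - μ - (c - μ) = x - c by ring]]
  rw [integral_sub_right_eq_self (fun y => |y - (c - μ)| * Real.exp (-|y| / b)) μ]
  exact lapAbsIntegral b hb (c - μ)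

lemma lapShiftExpIntegrable (b : ℝ) (hb : 0 < b) (μ : ℝ) :
    Integrable (fun x => Real.exp (-|x - μ| / b)) :=
  (lapExpAbsIntegrable b hb).comp_sub_right μ

lemma lapShiftExpIntegral (b : ℝ) (hb : 0 < b) (μ : ℝ) :
    ∫ x : ℝ, Real.exp (-|x - μ| / b) = 2 * b := by
  rw [show (fun x : ℝ => Real.exp (-|x - μ| / b)) =
      fun x => Real.exp (-|x - μ| / b) from rfl,
    integral_sub_right_eq_self (fun y => Real.exp (-|y| / b)) μ]
  exact lapExpAbsIntegral b hb


/-- KL divergence between two Laplace distributions: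
`KL(Lap(μ₁,b₁) ‖ Lap(μ₀,b₀)) = log(b₀/b₁) + |μ₁−μ₀|/b₀ + (b₁/b₀)·exp(−|μ₁−μ₀|/b₁) − 1`. -/
theorem klDiv_laplace (μ₀ μ₁ b₀ b₁ : ℝ) (hb₀ : 0 < b₀) (hb₁ : 0 < b₁) :
    klDiv (laplaceMeasure μ₁ b₁) (laplaceMeasure μ₀ b₀) =
      Real.log (b₀ / b₁) + |μ₁ - μ₀| / b₀ +
        (b₁ / b₀) * Real.exp (-|μ₁ - μ₀| / b₁) - 1 := by
  have h2b₀ : (0:ℝ) < 2 * b₀ := by positivity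
  have h2b₁ : (0:ℝ) < 2 * b₁ := by positivity
  set p₀ : ℝ → ℝ := fun x => (2 * b₀)⁻¹ * Real.exp (-|x - μ₀| / b₀) with hp₀
  set p₁ : ℝ → ℝ := fun x => (2 * b₁)⁻¹ * Real.exp (-|x - μ₁| / b₁) with hp₁
  have hp₀pos : ∀ x, 0 < p₀ x := fun x => by positivity
  have hp₁pos : ∀ x, 0 < p₁ x := fun x => by positivity
  have hm₀ : Measurable fun x => ENNReal.ofReal (p₀ x) :=
    (Continuous.measurable (by continuity)).ennreal_ofReal
  have hm₁ : Measurable fun x => ENNReal.ofReal (p₁ x) :=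
    (Continuous.measurable (by continuity)).ennreal_ofReal
  have hQ : laplaceMeasure μ₁ b₁ = volume.withDensity fun x => ENNReal.ofReal (p₁ x) := rfl
  have hQ' : laplaceMeasure μ₀ b₀ = volume.withDensity fun x => ENNReal.ofReal (p₀ x) := rfl
  haveI : SigmaFinite (laplaceMeasure μ₁ b₁) := by
    rw [hQ]
    exact SigmaFinite.withDensity_of_ne_top (ae_of_all _ fun x => ENNReal.ofReal_ne_top)
  have hac : laplaceMeasure μ₁ b₁ ≪ (volume : Measure ℝ) := by
    rw [hQ]; exact withDensity_absolutelyContinuous _ _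
  have h₀ := Measure.rnDeriv_withDensity_right_of_absolutelyContinuous hac hm₀.aemeasurable
    (ae_of_all _ fun x => by simp [ENNReal.ofReal_eq_zero, not_le, hp₀pos x])
    (ae_of_all _ fun x => ENNReal.ofReal_ne_top)
  have h₁ := Measure.rnDeriv_withDensity (volume : Measure ℝ) hm₁
  rw [← hQ] at h₁
  have hlog : ∀ᵐ x ∂(volume : Measure ℝ),
      Real.log (((laplaceMeasure μ₁ b₁).rnDeriv (laplaceMeasure μ₀ b₀) x).toReal) =
      Real.log (p₁ x) - Real.log (p₀ x) := by
    filter_upwards [h₀, h₁] with x hx hx1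
    rw [hQ', hx, hx1, ← ENNReal.ofReal_inv_of_pos (hp₀pos x),
      ← ENNReal.ofReal_mul (by positivity), ENNReal.toReal_ofReal (by positivity),
      Real.log_mul (by positivity) (hp₁pos x).ne', Real.log_inv]
    ring
  rw [klDiv, integral_congr_ae (hac.ae_le hlog), hQ]
  rw [show (fun x => ENNReal.ofReal (p₁ x)) =
      (fun x => ((Real.toNNReal (p₁ x) : ℝ≥0) : ℝ≥0∞)) from rfl]
  rw [integral_withDensity_eq_integral_smul
    (by fun_prop : Measurable fun x => Real.toNNReal (p₁ x)) _]
  have hsmul : ∀ x : ℝ, (Real.toNNReal (p₁ x)) • (Real.log (p₁ x) - Real.log (p₀ x)) =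
      p₁ x * (Real.log (p₁ x) - Real.log (p₀ x)) := by
    intro x
    rw [NNReal.smul_def, Real.coe_toNNReal _ (hp₁pos x).le, smul_eq_mul]
  rw [integral_congr_ae (ae_of_all _ hsmul)]
  -- now a pure Lebesgue integral computation
  set K : ℝ := Real.log (b₀ / b₁) with hK
  have hlogs : ∀ x : ℝ, Real.log (p₁ x) - Real.log (p₀ x) =
      K + |x - μ₀| / b₀ - |x - μ₁| / b₁ := by
    intro x
    rw [hp₀, hp₁]
    simp only []
    rw [Real.log_mul (by positivity) (Real.exp_pos _).ne',
      Real.log_mul (by positivity) (Real.exp_pos _).ne',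
      Real.log_exp, Real.log_exp, Real.log_inv, Real.log_inv,
      Real.log_mul two_ne_zero hb₀.ne', Real.log_mul two_ne_zero hb₁.ne',
      hK, Real.log_div hb₀.ne' hb₁.ne']
    ring
  have hint1 : Integrable (fun x : ℝ => ((2 * b₁)⁻¹ * K) * Real.exp (-|x - μ₁| / b₁)) :=
    (lapShiftExpIntegrable b₁ hb₁ μ₁).const_mul _
  have hint2 : Integrable
      (fun x : ℝ => ((2 * b₁)⁻¹ * b₀⁻¹) * (|x - μ₀| * Real.exp (-|x - μ₁| / b₁))) :=
    (lapShiftIntegrable b₁ hb₁ μ₁ μ₀).const_mul _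
  have hint3 : Integrable
      (fun x : ℝ => ((2 * b₁)⁻¹ * b₁⁻¹) * (|x - μ₁| * Real.exp (-|x - μ₁| / b₁))) :=
    (lapShiftIntegrable b₁ hb₁ μ₁ μ₁).const_mul _
  have hrw : (fun x : ℝ => p₁ x * (Real.log (p₁ x) - Real.log (p₀ x))) =
      fun x : ℝ => (((2 * b₁)⁻¹ * K) * Real.exp (-|x - μ₁| / b₁) +
        ((2 * b₁)⁻¹ * b₀⁻¹) * (|x - μ₀| * Real.exp (-|x - μ₁| / b₁))) -
        ((2 * b₁)⁻¹ * b₁⁻¹) * (|x - μ₁| * Real.exp (-|x - μ₁| / b₁)) := by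
    funext x
    rw [hlogs x, hp₁]
    simp only []
    field_simp
  have hint12 : Integrable (fun x : ℝ => ((2 * b₁)⁻¹ * K) * Real.exp (-|x - μ₁| / b₁) +
      ((2 * b₁)⁻¹ * b₀⁻¹) * (|x - μ₀| * Real.exp (-|x - μ₁| / b₁))) := hint1.add hint2
  rw [hrw, integral_sub hint12 hint3, integral_add hint1 hint2,
    integral_const_mul, integral_const_mul, integral_const_mul,
    lapShiftExpIntegral b₁ hb₁ μ₁, lapShiftIntegral b₁ hb₁ μ₁ μ₀,
    lapShiftIntegral b₁ hb₁ μ₁ μ₁]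
  rw [abs_sub_comm μ₀ μ₁]
  simp only [sub_self, abs_zero, neg_zero, zero_div, Real.exp_zero]
  field_simp
  ring
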